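/- Fix an integer r ≥ 2, a ∈ {0,1}, p1, p2 ∈ (0,1), and let q = max(p1, p2). Then (p1(1-p1) + p2(1-p2)) / ((r+a) p2 (1-p1) + (r-a) p1 (1-p2)) ≥ (1-q)/(r+a). -/
import Mathlib


/-- Key inequality for the OR/LOR efficiency bound: with `q = max(p1,p2)`,
`(p1(1-p1) + p2(1-p2)) / ((r+a)p2(1-p1) + (r-a)p1(1-p2)) ≥ (1-q)/(r+a)`. -/
theorem stmt18 (r : ℕ) (hr : 2 ≤ r) (a : ℝ) (ha : a = 0 ∨ a = 1)
    (p1 p2 : ℝ) (hp1 : p1 ∈ Set.Ioo (0:ℝ) 1) (hp2 : p2 ∈ Set.Ioo (0:ℝ) 1) :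
    (1 - max p1 p2) / ((r : ℝ) + a) ≤
      (p1 * (1 - p1) + p2 * (1 - p2)) /
        (((r : ℝ) + a) * p2 * (1 - p1) + ((r : ℝ) - a) * p1 * (1 - p2)) := by
  obtain ⟨h1, h2⟩ := hp1
  obtain ⟨h3, h4⟩ := hp2
  have hr' : (2:ℝ) ≤ (r:ℝ) := by exact_mod_cast hr
  have ha0 : 0 ≤ a := by rcases ha with h | h <;> simp [h]
  have ha1 : a ≤ 1 := by rcases ha with h | h <;> simp [h]
  have hra : 0 < (r:ℝ) + a := by linarith
  have hra' : (1:ℝ) ≤ (r:ℝ) - a := by linarith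
  have hD : 0 < ((r : ℝ) + a) * p2 * (1 - p1) + ((r : ℝ) - a) * p1 * (1 - p2) := by
    have := mul_pos (mul_pos hra h3) (by linarith : (0:ℝ) < 1 - p1)
    nlinarith [mul_pos h1 (by linarith : (0:ℝ) < 1 - p2)]
  rw [div_le_div_iff₀ hra hD]
  rcases le_total p1 p2 with h | h
  · rw [max_eq_right h]
    have k1 : (0:ℝ) ≤ ((r:ℝ)+a)*(1-p1) - ((r:ℝ)-a)*(1-p2)^2 := by
      nlinarith [mul_nonneg (by linarith : (0:ℝ) ≤ (r:ℝ)-a)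
          (mul_nonneg (by linarith : (0:ℝ) ≤ 1-p2) h3.le),
        mul_nonneg (by linarith : (0:ℝ) ≤ (r:ℝ)-a) (by linarith : (0:ℝ) ≤ p2-p1),
        mul_nonneg ha0 (by linarith : (0:ℝ) ≤ 1-p1)]
    nlinarith [mul_pos (mul_pos h1 h3) (by linarith : (0:ℝ) < 1 - p2),
      mul_nonneg h1.le k1]
  · rw [max_eq_left h]
    have k2 : (0:ℝ) ≤ ((r:ℝ)+a)*((1-p2) - (1-p1)^2) := by
      nlinarith [mul_nonneg hra.le
          (mul_nonneg (by linarith : (0:ℝ) ≤ 1-p1) h1.le),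
        mul_nonneg hra.le (by linarith : (0:ℝ) ≤ p1-p2)]
    have k3 : (0:ℝ) ≤ ((r:ℝ)+a) - ((r:ℝ)-a)*(1-p2) := by nlinarith
    nlinarith [mul_nonneg h3.le k2,
      mul_nonneg (mul_nonneg h1.le (by linarith : (0:ℝ) ≤ 1 - p1)) k3]
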